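/- Let n ≥ 1, m ≥ 1, 0 ≤ u ≤ n and 1 ≤ v ≤ n. Then J_{m,u,v} ∩ 𝔄̃_u = J̃_{m,u,v} as ideals of R_n, and consequently 𝕁_{m,u} ∩ Ã_u = 𝕁̃_{m,u}, where Ã_u = {B ∈ IA_n : every entry of B − I_n lies in 𝔄̃_u}. -/

import Mathlib

noncomputable section

open Matrix

/-- The Laurent polynomial ring `ℤ[x₁^{±1},…,x_n^{±1}]`, realized as the group
algebra of the free abelian group `ℤⁿ` over `ℤ`. -/
abbrev LaurentR (n : ℕ) : Type := AddMonoidAlgebra ℤ (Fin n →₀ ℤ)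

/-- `x_i` as a unit of `LaurentR n`. -/
def Xu {n : ℕ} (i : Fin n) : (LaurentR n)ˣ where
  val := AddMonoidAlgebra.single (Finsupp.single i 1) 1
  inv := AddMonoidAlgebra.single (-Finsupp.single i 1) 1
  val_inv := by
    rw [AddMonoidAlgebra.single_mul_single]
    simp [AddMonoidAlgebra.one_def]
  inv_val := by
    rw [AddMonoidAlgebra.single_mul_single]
    simp [AddMonoidAlgebra.one_def]

/-- `x_i` as an element of `LaurentR n`. -/
def Xv {n : ℕ} (i : Fin n) : LaurentR n := (Xu i : LaurentR n)

/-- `σ_i = x_i - 1`. -/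
def sg {n : ℕ} (i : Fin n) : LaurentR n := Xv i - 1

/-- The vector `σ⃗`. -/
def sgVec (n : ℕ) : Fin n → LaurentR n := fun i => sg i

/-- `μ_{r,m} = 1 + x_r + ⋯ + x_r^{m-1}`. -/
def muv {n : ℕ} (r : Fin n) (m : ℕ) : LaurentR n := ∑ i ∈ Finset.range m, Xv r ^ i

/-- The augmentation ideal `𝔄_n = Σ σ_i R_n`. -/
def augI (n : ℕ) : Ideal (LaurentR n) := Ideal.span (Set.range (sgVec n))

/-- The ideal `m·R_n`. -/
def OI (n m : ℕ) : Ideal (LaurentR n) := Ideal.span {(m : LaurentR n)}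

/-- The ideal `H_{n,m} = Σ_r (x_r^m − 1)R_n + mR_n`. -/
def HI (n m : ℕ) : Ideal (LaurentR n) :=
  Ideal.span (Set.range (fun r : Fin n => Xv r ^ m - 1) ∪ {(m : LaurentR n)})

/-- `IA_n = {A ∈ GL_n(R_n) : A·σ⃗ = σ⃗}` as a subgroup of `GL_n(R_n)`. -/
def IAn (n : ℕ) : Subgroup (GL (Fin n) (LaurentR n)) where
  carrier := {g | (g : Matrix (Fin n) (Fin n) (LaurentR n)) *ᵥ sgVec n = sgVec n}
  one_mem' := by simp
  mul_mem' := by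
    intro a b ha hb
    simp only [Set.mem_setOf_eq, Units.val_mul] at *
    rw [← Matrix.mulVec_mulVec, hb, ha]
  inv_mem' := by
    intro a ha
    simp only [Set.mem_setOf_eq] at *
    have h : ((a⁻¹ : GL (Fin n) (LaurentR n)) : Matrix (Fin n) (Fin n) (LaurentR n)) *ᵥ
        ((a : Matrix (Fin n) (Fin n) (LaurentR n)) *ᵥ sgVec n) = sgVec n := by
      rw [Matrix.mulVec_mulVec, ← Units.val_mul, inv_mul_cancel, Units.val_one,
        Matrix.one_mulVec]
    rw [ha] at h
    exact h

/-- The underlying matrix of an element of `IA_n`. -/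
def matOf {n : ℕ} (g : IAn n) : Matrix (Fin n) (Fin n) (LaurentR n) :=
  ((g : GL (Fin n) (LaurentR n)) : Matrix (Fin n) (Fin n) (LaurentR n))

/-- The principal congruence subgroup `IG_{n,m}` (as a subset of `IA_n`). -/
def IGnm (n m : ℕ) : Set (IAn n) := {g | ∀ k l, (matOf g - 1) k l ∈ HI n m}

/-- `IA_n^m`: the subgroup of `IA_n` generated by all `m`-th powers. -/
def IApow (n m : ℕ) : Subgroup (IAn n) := Subgroup.closure (Set.range fun g : IAn n => g ^ m)


/-- `ISL_{n−1,i}(H)` for `n = k+1`: elements `I + A` of `IA_n` whose `i`-th row of `A`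
vanishes, all entries of the minor `A_{i,i}` lie in `σ_iR_n ∩ H`, and
`det(I_{n−1} + A_{i,i}) = 1`. -/
def ISL {k : ℕ} (i : Fin (k + 1)) (H : Ideal (LaurentR (k + 1))) : Set (IAn (k + 1)) :=
  {g | (∀ l, (matOf g - 1) i l = 0) ∧
    (∀ a b : Fin k, (matOf g - 1) (i.succAbove a) (i.succAbove b) ∈
      Ideal.span {sg i} ⊓ H) ∧
    ((matOf g).submatrix i.succAbove i.succAbove).det = 1}

/-- `IGL_{n−1,i}` for `n = k+1`: elements `I + A` of `IA_n` whose `i`-th row of `A`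
vanishes and all entries of the minor `A_{i,i}` lie in `σ_iR_n`. -/
def IGLset {k : ℕ} (i : Fin (k + 1)) : Set (IAn (k + 1)) :=
  {g | (∀ l, (matOf g - 1) i l = 0) ∧
    ∀ a b : Fin k, (matOf g - 1) (i.succAbove a) (i.succAbove b) ∈ Ideal.span {sg i}}

/-- The elementary matrix `I_d + r·E_{a,b}` (`a ≠ b`) as an element of `GL_d(A)`. -/
def elemGL {d : ℕ} {A : Type*} [CommRing A] (a b : Fin d) (hab : a ≠ b) (r : A) :
    GL (Fin d) A where
  val := 1 + Matrix.single a b r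
  inv := 1 - Matrix.single a b r
  val_inv := by
    have h2 : Matrix.single a b r * Matrix.single a b r = 0 :=
      by simp [Matrix.single_mul_single_of_ne, hab.symm]
    rw [mul_sub, mul_one, add_mul, one_mul, h2]
    abel
  inv_val := by
    have h2 : Matrix.single a b r * Matrix.single a b r = 0 :=
      by simp [Matrix.single_mul_single_of_ne, hab.symm]
    rw [sub_mul, one_mul, mul_add, mul_one, h2]
    abel

/-- `E_d(A)`: the subgroup generated by the elementary matrices. -/
def Egrp (d : ℕ) (A : Type*) [CommRing A] : Subgroup (GL (Fin d) A) :=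
  Subgroup.closure {g | ∃ (a b : Fin d) (hab : a ≠ b) (r : A), g = elemGL a b hab r}

/-- `E_d(A,H)`: the normal closure in `E_d(A)` of the elementary matrices with
parameter in the ideal `H`. -/
def EgrpRel (d : ℕ) (A : Type*) [CommRing A] (H : Ideal A) : Subgroup (GL (Fin d) A) :=
  Subgroup.closure {g | ∃ e ∈ Egrp d A, ∃ (a b : Fin d) (hab : a ≠ b), ∃ r ∈ H,
    g = e * elemGL a b hab r * e⁻¹}

/-- The generic column ideal used in the definitions of `J_{m,u,v}` and `J̃_{m,u,v}`
(with 1-indexed `u ∈ {0,…,n}` and `v` a 0-indexed column, so "`v ≤ u`" reads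
`v.val < u`).  `lead` is the leading factor (`𝔄̃_u` resp. `𝔄_n`). -/
def colIdeal (n m u : ℕ) (lead : Ideal (LaurentR n)) (v : Fin n) : Ideal (LaurentR n) :=
  lead * ((∑ r : Fin n, if r.val < u then augI n * Ideal.span {sg r * muv r m} else 0)
      + augI n * OI n m + OI n m ^ 2)
    + (if v.val < u then
        ∑ r : Fin n, if u ≤ r.val then Ideal.span {sg r ^ 3 * muv r m} else 0
      else
        (∑ r : Fin n, if u ≤ r.val ∧ r ≠ v then Ideal.span {sg r ^ 3 * muv r m} else 0)
          + augI n * Ideal.span {sg v ^ 2 * muv v m})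

/-- `𝔄̃_u = Σ_{r=u+1}^n σ_rR_n` (1-indexed `u`). -/
def augTil (n u : ℕ) : Ideal (LaurentR n) :=
  Ideal.span {x | ∃ r : Fin n, u ≤ r.val ∧ x = sg r}

/-- The ideal `J̃_{m,u,v}`. -/
def Jtil (n m u : ℕ) (v : Fin n) : Ideal (LaurentR n) := colIdeal n m u (augTil n u) v

/-- The ideal `J_{m,u,v}`. -/
def Jfull (n m u : ℕ) (v : Fin n) : Ideal (LaurentR n) := colIdeal n m u (augI n) v

/-- The determinant condition `det = ∏_r x_r^{s_r·m²}`. -/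
def detMon (n m : ℕ) (g : IAn n) : Prop :=
  ∃ s : Fin n → ℤ,
    (matOf g).det = ∏ r : Fin n, ((Xu r ^ (s r * (m : ℤ) ^ 2) : (LaurentR n)ˣ) : LaurentR n)

/-- The set `𝕁̃_{m,u}`. -/
def JmatTil (n m u : ℕ) : Set (IAn n) :=
  {g | (∀ k v, (matOf g - 1) k v ∈ Jtil n m u v) ∧ detMon n m g}

/-- The set `𝕁_{m,u}`. -/
def JmatFull (n m u : ℕ) : Set (IAn n) :=
  {g | (∀ k v, (matOf g - 1) k v ∈ Jfull n m u v) ∧ detMon n m g}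

/-- The ideal `J_m = Σ_r σ_r³μ_{r,m}R_n + 𝔄_n²·mR_n + 𝔄_n·m²R_n`. -/
def JmI (n m : ℕ) : Ideal (LaurentR n) :=
  Ideal.span (Set.range fun r : Fin n => sg r ^ 3 * muv r m)
    + augI n ^ 2 * OI n m + augI n * OI n (m ^ 2)

/-- The free metabelian group `Φ_n = F_n/F_n''`. -/
instance derivedSeries_normal' (G : Type*) [Group G] (n : ℕ) : (derivedSeries G n).Normal :=
  derivedSeries_normal _ _

def Phi (n : ℕ) : Type := FreeGroup (Fin n) ⧸ derivedSeries (FreeGroup (Fin n)) 2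

instance (n : ℕ) : Group (Phi n) :=
  inferInstanceAs (Group (FreeGroup (Fin n) ⧸ derivedSeries (FreeGroup (Fin n)) 2))

namespace Statement15

variable {n : ℕ}

/-! ### The retraction `π` sending `x_r ↦ 1` for `r ≥ u`. -/

def piH (n u : ℕ) : LaurentR n →+* LaurentR n :=
  AddMonoidAlgebra.mapDomainRingHom ℤ (Finsupp.filterAddHom (fun r : Fin n => r.val < u))

lemma piH_single (u : ℕ) (g : Fin n →₀ ℤ) (c : ℤ) :
    piH n u (AddMonoidAlgebra.single g c)
      = AddMonoidAlgebra.single (g.filter (fun r : Fin n => r.val < u)) c := by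
  show AddMonoidAlgebra.mapDomain _ _ = _
  rw [AddMonoidAlgebra.mapDomain_single]
  rfl

lemma piH_Xv_lt {u : ℕ} {r : Fin n} (h : r.val < u) : piH n u (Xv r) = Xv r := by
  show piH n u (AddMonoidAlgebra.single (Finsupp.single r 1) 1) = _
  rw [piH_single, Finsupp.filter_single_of_pos (p := fun r : Fin n => r.val < u) h]
  rfl

lemma piH_Xv_ge {u : ℕ} {r : Fin n} (h : u ≤ r.val) : piH n u (Xv r) = 1 := by
  show piH n u (AddMonoidAlgebra.single (Finsupp.single r 1) 1) = _
  rw [piH_single, Finsupp.filter_single_of_neg (p := fun r : Fin n => r.val < u) (by omega)]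
  simp [AddMonoidAlgebra.one_def]

lemma piH_sg_lt {u : ℕ} {r : Fin n} (h : r.val < u) : piH n u (sg r) = sg r := by
  simp [sg, _root_.map_sub, piH_Xv_lt h]

lemma piH_sg_ge {u : ℕ} {r : Fin n} (h : u ≤ r.val) : piH n u (sg r) = 0 := by
  simp [sg, _root_.map_sub, piH_Xv_ge h]

lemma piH_muv_lt {u m : ℕ} {r : Fin n} (h : r.val < u) : piH n u (muv r m) = muv r m := by
  simp [muv, map_sum, _root_.map_pow, piH_Xv_lt h]

lemma piH_natCast (u m : ℕ) : piH n u (m : LaurentR n) = (m : LaurentR n) :=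
  map_natCast _ m

/-! ### Membership facts -/

lemma sg_mem_augI (r : Fin n) : sg r ∈ augI n :=
  Ideal.subset_span ⟨r, rfl⟩

lemma sg_mem_augTil {u : ℕ} {r : Fin n} (h : u ≤ r.val) : sg r ∈ augTil n u :=
  Ideal.subset_span ⟨r, h, rfl⟩

lemma mul_sg_mem_augTil {u : ℕ} {r : Fin n} (h : u ≤ r.val) (c : LaurentR n) :
    c * sg r ∈ augTil n u :=
  Ideal.mul_mem_left _ _ (sg_mem_augTil h)

lemma augTil_le_augI (u : ℕ) : augTil n u ≤ augI n := by
  rw [augTil, Ideal.span_le]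
  rintro x ⟨r, -, rfl⟩
  exact sg_mem_augI r

/-- One-sided inverse property: `π` kills `augTil`. -/
lemma piH_eq_zero_of_augTil {u : ℕ} {z : LaurentR n} (hz : z ∈ augTil n u) :
    piH n u z = 0 := by
  have : augTil n u ≤ RingHom.ker (piH n u) := by
    rw [augTil, Ideal.span_le]
    rintro x ⟨r, hr, rfl⟩
    exact piH_sg_ge hr
  exact this hz

/-- `single h 1 - 1 ∈ augTil` when `h` is supported on indices `≥ u`. -/
lemma single_single_sub_one_mem {u : ℕ} (a : Fin n) (ha : u ≤ a.val) (b : ℤ) :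
    (AddMonoidAlgebra.single (Finsupp.single a b) 1 : LaurentR n) - 1 ∈ augTil n u := by
  have hXv : ∀ g : Fin n →₀ ℤ,
      (AddMonoidAlgebra.single (g + Finsupp.single a 1) 1 : LaurentR n)
        = AddMonoidAlgebra.single g 1 * Xv a := by
    intro g
    rw [show (Xv a : LaurentR n) = AddMonoidAlgebra.single (Finsupp.single a 1) 1 from rfl,
      AddMonoidAlgebra.single_mul_single, mul_one]
  have hneg : (AddMonoidAlgebra.single (Finsupp.single a (-1)) 1 : LaurentR n) - 1
      ∈ augTil n u := by
    have h1 : (AddMonoidAlgebra.single (Finsupp.single a (-1)) 1 : LaurentR n) * Xv a = 1 := by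
      rw [show (Xv a : LaurentR n) = AddMonoidAlgebra.single (Finsupp.single a 1) 1 from rfl,
        AddMonoidAlgebra.single_mul_single]
      simp [AddMonoidAlgebra.one_def]
    have : (AddMonoidAlgebra.single (Finsupp.single a (-1)) 1 : LaurentR n) - 1
        = -((AddMonoidAlgebra.single (Finsupp.single a (-1)) 1 : LaurentR n) * sg a) := by
      rw [sg]; rw [mul_sub, h1]; ring
    rw [this]
    exact neg_mem (mul_sg_mem_augTil ha _)
  induction b using Int.induction_on with
  | zero => simp [AddMonoidAlgebra.one_def]
  | succ k ih =>
      have : Finsupp.single a ((k : ℤ) + 1) = Finsupp.single a (k : ℤ) + Finsupp.single a 1 :=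
        Finsupp.single_add a _ _
      rw [this, hXv]
      have : AddMonoidAlgebra.single (Finsupp.single a (k : ℤ)) 1 * Xv a - 1
          = AddMonoidAlgebra.single (Finsupp.single a (k : ℤ)) 1 * sg a
            + (AddMonoidAlgebra.single (Finsupp.single a (k : ℤ)) 1 - 1) := by
        rw [sg]; ring
      rw [this]
      exact add_mem (mul_sg_mem_augTil ha _) ih
  | pred k ih =>
      have h1 : Finsupp.single a (-(k : ℤ) - 1)
          = Finsupp.single a (-(k : ℤ)) + Finsupp.single a (-1) := by
        rw [← Finsupp.single_add]; ring_nf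
      have h2 : (AddMonoidAlgebra.single (Finsupp.single a (-(k : ℤ) - 1)) 1 : LaurentR n)
          = AddMonoidAlgebra.single (Finsupp.single a (-(k : ℤ))) 1
            * AddMonoidAlgebra.single (Finsupp.single a (-1)) 1 := by
        rw [h1, AddMonoidAlgebra.single_mul_single, mul_one]
      rw [h2]
      set X := (AddMonoidAlgebra.single (Finsupp.single a (-(k : ℤ))) 1 : LaurentR n)
      set Y := (AddMonoidAlgebra.single (Finsupp.single a (-1)) 1 : LaurentR n)
      have : X * Y - 1 = X * (Y - 1) + (X - 1) := by ring
      rw [this]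
      exact add_mem (Ideal.mul_mem_left _ _ hneg) ih

lemma single_sub_one_mem {u : ℕ} (h : Fin n →₀ ℤ) (hs : ∀ r ∈ h.support, u ≤ r.val) :
    (AddMonoidAlgebra.single h 1 : LaurentR n) - 1 ∈ augTil n u := by
  induction h using Finsupp.induction with
  | zero => simp [AddMonoidAlgebra.one_def]
  | single_add a b f haf hb ih =>
      have hau : u ≤ a.val := by
        apply hs
        rw [Finsupp.mem_support_iff, Finsupp.add_apply, Finsupp.single_eq_same,
          Finsupp.notMem_support_iff.mp haf, add_zero]
        exact hb
      have hfs : ∀ r ∈ f.support, u ≤ r.val := by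
        intro r hr
        apply hs
        rw [Finsupp.mem_support_iff, Finsupp.add_apply]
        have hra : r ≠ a := by rintro rfl; exact haf hr
        rw [Finsupp.single_eq_of_ne hra, zero_add]
        exact Finsupp.mem_support_iff.mp hr
      have h2 : (AddMonoidAlgebra.single (Finsupp.single a b + f) 1 : LaurentR n)
          = AddMonoidAlgebra.single (Finsupp.single a b) 1 * AddMonoidAlgebra.single f 1 := by
        rw [AddMonoidAlgebra.single_mul_single, mul_one]
      rw [h2]
      set X := (AddMonoidAlgebra.single (Finsupp.single a b) 1 : LaurentR n)
      set Y := (AddMonoidAlgebra.single f 1 : LaurentR n)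
      have : X * Y - 1 = X * (Y - 1) + (X - 1) := by ring
      rw [this]
      exact add_mem (Ideal.mul_mem_left _ _ (ih hfs))
        (single_single_sub_one_mem a hau b)

/-- Key fact 1: `z - π z ∈ augTil` for every `z`. -/
lemma sub_piH_mem (u : ℕ) (z : LaurentR n) : z - piH n u z ∈ augTil n u := by
  induction z using AddMonoidAlgebra.induction with
  | zero => simp
  | single_add g c f hgf hc ih =>
      rw [_root_.map_add]
      have hsp : ∀ z w : LaurentR n,
          z + w - (piH n u z + piH n u w) = z - piH n u z + (w - piH n u w) := by
        intro z w; ring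
      rw [hsp]
      refine add_mem ?_ ih
      rw [piH_single]
      set p : Fin n → Prop := fun r : Fin n => r.val < u with hp
      have hsplit : (AddMonoidAlgebra.single g c : LaurentR n)
          = AddMonoidAlgebra.single (g.filter p) c
            * AddMonoidAlgebra.single (g.filter (fun r => ¬ p r)) 1 := by
        rw [AddMonoidAlgebra.single_mul_single, mul_one,
          Finsupp.filter_pos_add_filter_neg]
      have : (AddMonoidAlgebra.single g c : LaurentR n)
            - AddMonoidAlgebra.single (g.filter p) c
          = AddMonoidAlgebra.single (g.filter p) c
            * (AddMonoidAlgebra.single (g.filter (fun r => ¬ p r)) 1 - 1) := by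
        rw [mul_sub, ← hsplit, mul_one]
      rw [this]
      refine Ideal.mul_mem_left _ _ (single_sub_one_mem _ ?_)
      intro r hr
      rw [Finsupp.support_filter, Finset.mem_filter] at hr
      simpa [hp] using hr.2

/-! ### The ideals `S` and `T` -/

def SI (n m u : ℕ) : Ideal (LaurentR n) :=
  (∑ r : Fin n, if r.val < u then augI n * Ideal.span {sg r * muv r m} else 0)
    + augI n * OI n m + OI n m ^ 2

def TI (n m u : ℕ) (v : Fin n) : Ideal (LaurentR n) :=
  if v.val < u then
    ∑ r : Fin n, if u ≤ r.val then Ideal.span {sg r ^ 3 * muv r m} else 0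
  else
    (∑ r : Fin n, if u ≤ r.val ∧ r ≠ v then Ideal.span {sg r ^ 3 * muv r m} else 0)
      + augI n * Ideal.span {sg v ^ 2 * muv v m}

lemma colIdeal_eq (n m u : ℕ) (lead : Ideal (LaurentR n)) (v : Fin n) :
    colIdeal n m u lead v = lead * SI n m u + TI n m u v := rfl

lemma sum_ideal_le {ι : Type*} {s : Finset ι} {f : ι → Ideal (LaurentR n)}
    {I : Ideal (LaurentR n)} (h : ∀ x ∈ s, f x ≤ I) : (∑ x ∈ s, f x) ≤ I :=
  Finset.sum_induction f (· ≤ I)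
    (fun a b ha hb => by rw [Submodule.add_eq_sup]; exact sup_le ha hb)
    (by simpa using bot_le) h

lemma term_le_SI {m u : ℕ} {r : Fin n} (h : r.val < u) :
    augI n * Ideal.span {sg r * muv r m} ≤ SI n m u := by
  have h1 : augI n * Ideal.span {sg r * muv r m}
      ≤ ∑ q : Fin n, if q.val < u then augI n * Ideal.span {sg q * muv q m} else 0 := by
    rw [← Finset.add_sum_erase _ _ (Finset.mem_univ r), if_pos h, Submodule.add_eq_sup]
    exact le_sup_left
  refine h1.trans ?_
  rw [SI, Submodule.add_eq_sup, Submodule.add_eq_sup]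
  exact le_sup_of_le_left le_sup_left

lemma augIOI_le_SI (m u : ℕ) : augI n * OI n m ≤ SI n m u := by
  rw [SI, Submodule.add_eq_sup, Submodule.add_eq_sup]
  exact le_sup_of_le_left le_sup_right

lemma OI2_le_SI (m u : ℕ) : OI n m ^ 2 ≤ SI n m u := by
  rw [SI, Submodule.add_eq_sup, Submodule.add_eq_sup]
  exact le_sup_right

lemma span_sg3_le_augTil {m u : ℕ} {r : Fin n} (h : u ≤ r.val) :
    Ideal.span {sg r ^ 3 * muv r m} ≤ augTil n u := by
  rw [Ideal.span_singleton_le_iff_mem]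
  have : sg r ^ 3 * muv r m = sg r ^ 2 * muv r m * sg r := by ring
  rw [this]
  exact mul_sg_mem_augTil h _

lemma TI_le_augTil (n m u : ℕ) (v : Fin n) : TI n m u v ≤ augTil n u := by
  rw [TI]
  split_ifs with hv
  · refine sum_ideal_le fun r _ => ?_
    split_ifs with hr
    · exact span_sg3_le_augTil hr
    · simpa using bot_le
  · rw [Submodule.add_eq_sup]
    refine sup_le (sum_ideal_le fun r _ => ?_) ?_
    · split_ifs with hr
      · exact span_sg3_le_augTil hr.1
      · simpa using bot_le
    · refine Ideal.mul_le_right.trans ?_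
      rw [Ideal.span_singleton_le_iff_mem]
      have : sg v ^ 2 * muv v m = sg v * muv v m * sg v := by ring
      rw [this]
      exact mul_sg_mem_augTil (by omega) _

lemma Jtil_le_augTil (n m u : ℕ) (v : Fin n) : Jtil n m u v ≤ augTil n u := by
  rw [Jtil, colIdeal_eq, Submodule.add_eq_sup]
  exact sup_le Ideal.mul_le_left (TI_le_augTil n m u v)

/-! ### `π` preserves `augI` and `SI` -/

lemma piH_mem_augI {u : ℕ} {a : LaurentR n} (ha : a ∈ augI n) : piH n u a ∈ augI n := by
  have hle : Ideal.map (piH n u) (augI n) ≤ augI n := by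
    rw [augI, Ideal.map_span, Ideal.span_le]
    rintro x ⟨y, ⟨r, rfl⟩, rfl⟩
    by_cases h : r.val < u
    · show piH n u (sg r) ∈ augI n
      rw [piH_sg_lt h]; exact sg_mem_augI r
    · show piH n u (sg r) ∈ augI n
      rw [piH_sg_ge (by omega)]; exact zero_mem _
  exact hle (Ideal.mem_map_of_mem _ ha)

lemma piH_sg_muv {m u : ℕ} {r : Fin n} (h : r.val < u) :
    piH n u (sg r * muv r m) = sg r * muv r m := by
  rw [_root_.map_mul, piH_sg_lt h, piH_muv_lt h]

lemma mem_OI_sq {m : ℕ} {z : LaurentR n} :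
    z ∈ OI n m ^ 2 ↔ ∃ c, c * (m : LaurentR n) ^ 2 = z := by
  rw [OI, Ideal.span_singleton_pow, Ideal.mem_span_singleton']

lemma piH_mem_SI {m u : ℕ} {y : LaurentR n} (hy : y ∈ SI n m u) :
    piH n u y ∈ SI n m u := by
  suffices h : SI n m u ≤ Ideal.comap (piH n u) (SI n m u) from h hy
  rw [SI, Submodule.add_eq_sup, Submodule.add_eq_sup]
  refine sup_le (sup_le ?_ ?_) ?_
  · refine sum_ideal_le fun r _ => ?_
    split_ifs with hr
    · rw [Ideal.mul_le]
      intro a ha b hb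
      obtain ⟨c, rfl⟩ := Ideal.mem_span_singleton'.mp hb
      rw [Ideal.mem_comap, _root_.map_mul, _root_.map_mul, piH_sg_muv hr]
      exact term_le_SI hr (Ideal.mul_mem_mul (piH_mem_augI ha)
        (Ideal.mem_span_singleton'.mpr ⟨_, rfl⟩))
    · simpa using bot_le
  · rw [Ideal.mul_le]
    intro a ha b hb
    obtain ⟨c, rfl⟩ := Ideal.mem_span_singleton'.mp hb
    rw [Ideal.mem_comap, _root_.map_mul, _root_.map_mul, piH_natCast]
    exact augIOI_le_SI m u (Ideal.mul_mem_mul (piH_mem_augI ha)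
      (Ideal.mem_span_singleton'.mpr ⟨_, rfl⟩))
  · intro z hz
    obtain ⟨c, rfl⟩ := mem_OI_sq.mp hz
    rw [Ideal.mem_comap, _root_.map_mul, _root_.map_pow, piH_natCast]
    exact OI2_le_SI m u (mem_OI_sq.mpr ⟨_, rfl⟩)

/-! ### The key computations -/

lemma mul_sub_piH_mem {m u : ℕ} {x y : LaurentR n} (hx : x ∈ augI n) (hy : y ∈ SI n m u) :
    x * (y - piH n u y) ∈ augTil n u * SI n m u := by
  let V : Ideal (LaurentR n) :=
    { carrier := {y | y ∈ SI n m u ∧ x * (y - piH n u y) ∈ augTil n u * SI n m u}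
      add_mem' := by
        rintro a b ⟨ha1, ha2⟩ ⟨hb1, hb2⟩
        refine ⟨add_mem ha1 hb1, ?_⟩
        have heq : x * (a + b - piH n u (a + b))
            = x * (a - piH n u a) + x * (b - piH n u b) := by
          rw [_root_.map_add]; ring
        rw [heq]
        exact add_mem ha2 hb2
      zero_mem' := by simp
      smul_mem' := by
        rintro c y ⟨hy1, hy2⟩
        refine ⟨Ideal.mul_mem_left _ _ hy1, ?_⟩
        have heq : x * (c • y - piH n u (c • y))
            = c * (x * (y - piH n u y)) + (c - piH n u c) * (x * piH n u y) := by
          rw [smul_eq_mul, _root_.map_mul]; ring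
        show x * (c • y - piH n u (c • y)) ∈ augTil n u * SI n m u
        rw [heq]
        exact add_mem (Ideal.mul_mem_left _ _ hy2)
          (Ideal.mul_mem_mul (sub_piH_mem u c)
            (Ideal.mul_mem_left _ _ (piH_mem_SI hy1))) }
  suffices h : SI n m u ≤ V from (h hy).2
  rw [SI, Submodule.add_eq_sup, Submodule.add_eq_sup]
  refine sup_le (sup_le ?_ ?_) ?_
  · refine sum_ideal_le fun r _ => ?_
    split_ifs with hr
    · rw [Ideal.mul_le]
      intro a ha b hb
      obtain ⟨c, rfl⟩ := Ideal.mem_span_singleton'.mp hb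
      refine ⟨term_le_SI hr (Ideal.mul_mem_mul ha
        (Ideal.mem_span_singleton'.mpr ⟨_, rfl⟩)), ?_⟩
      have heq : x * (a * (c * (sg r * muv r m)) - piH n u (a * (c * (sg r * muv r m))))
          = (a - piH n u a) * (x * (c * (sg r * muv r m)))
            + (c - piH n u c) * (x * (piH n u a * (sg r * muv r m))) := by
        rw [_root_.map_mul, _root_.map_mul, piH_sg_muv hr]; ring
      rw [heq]
      refine add_mem (Ideal.mul_mem_mul (sub_piH_mem u a) ?_)
        (Ideal.mul_mem_mul (sub_piH_mem u c) ?_)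
      · exact term_le_SI hr (Ideal.mul_mem_mul hx
          (Ideal.mem_span_singleton'.mpr ⟨_, rfl⟩))
      · exact term_le_SI hr (Ideal.mul_mem_mul hx
          (Ideal.mem_span_singleton'.mpr ⟨_, rfl⟩))
    · simpa using bot_le
  · rw [Ideal.mul_le]
    intro a ha b hb
    obtain ⟨c, rfl⟩ := Ideal.mem_span_singleton'.mp hb
    refine ⟨augIOI_le_SI m u (Ideal.mul_mem_mul ha
      (Ideal.mem_span_singleton'.mpr ⟨_, rfl⟩)), ?_⟩
    have heq : x * (a * (c * (m : LaurentR n)) - piH n u (a * (c * (m : LaurentR n))))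
        = (a - piH n u a) * (x * (c * (m : LaurentR n)))
          + (c - piH n u c) * (x * (piH n u a * (m : LaurentR n))) := by
      rw [_root_.map_mul, _root_.map_mul, piH_natCast]; ring
    rw [heq]
    refine add_mem (Ideal.mul_mem_mul (sub_piH_mem u a) ?_)
      (Ideal.mul_mem_mul (sub_piH_mem u c) ?_)
    · exact augIOI_le_SI m u (Ideal.mul_mem_mul hx
        (Ideal.mem_span_singleton'.mpr ⟨_, rfl⟩))
    · exact augIOI_le_SI m u (Ideal.mul_mem_mul hx
        (Ideal.mem_span_singleton'.mpr ⟨_, rfl⟩))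
  · intro z hz
    obtain ⟨c, rfl⟩ := mem_OI_sq.mp hz
    refine ⟨OI2_le_SI m u (mem_OI_sq.mpr ⟨_, rfl⟩), ?_⟩
    have heq : x * (c * (m : LaurentR n) ^ 2 - piH n u (c * (m : LaurentR n) ^ 2))
        = (c - piH n u c) * (x * (m : LaurentR n) ^ 2) := by
      rw [_root_.map_mul, _root_.map_pow, piH_natCast]; ring
    rw [heq]
    exact Ideal.mul_mem_mul (sub_piH_mem u c)
      (OI2_le_SI m u (mem_OI_sq.mpr ⟨_, rfl⟩))

lemma sub_piH_mem_mulSI {m u : ℕ} {z : LaurentR n} (hz : z ∈ augI n * SI n m u) :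
    z - piH n u z ∈ augTil n u * SI n m u := by
  refine Submodule.mul_induction_on hz ?_ ?_
  · intro a ha b hb
    have heq : a * b - piH n u (a * b)
        = (a - piH n u a) * b + piH n u a * (b - piH n u b) := by
      rw [_root_.map_mul]; ring
    rw [heq]
    have h2 : piH n u a * (b - piH n u b) ∈ augTil n u * SI n m u :=
      mul_sub_piH_mem (piH_mem_augI ha) hb
    exact add_mem (Ideal.mul_mem_mul (sub_piH_mem u a) hb) h2
  · intro a b ha hb
    have heq : a + b - piH n u (a + b) = (a - piH n u a) + (b - piH n u b) := by
      rw [_root_.map_add]; ring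
    rw [heq]
    exact add_mem ha hb

/-! ### The main ideal equality -/

theorem Jcap (n m u : ℕ) (v : Fin n) : Jfull n m u v ⊓ augTil n u = Jtil n m u v := by
  apply le_antisymm
  · intro z hz
    obtain ⟨hz1, hz2⟩ := Submodule.mem_inf.mp hz
    rw [Jfull, colIdeal_eq, Submodule.add_eq_sup] at hz1
    obtain ⟨a, ha, t, ht, rfl⟩ := Submodule.mem_sup.mp hz1
    have hta : t ∈ augTil n u := TI_le_augTil n m u v ht
    have haa : a ∈ augTil n u := by
      have h3 := sub_mem hz2 hta
      simpa using h3
    have key : a ∈ augTil n u * SI n m u := by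
      have h2 := sub_piH_mem_mulSI ha
      rwa [piH_eq_zero_of_augTil haa, sub_zero] at h2
    rw [Jtil, colIdeal_eq, Submodule.add_eq_sup]
    exact Submodule.mem_sup.mpr ⟨a, key, t, ht, rfl⟩
  · refine le_inf ?_ (Jtil_le_augTil n m u v)
    rw [Jtil, Jfull, colIdeal_eq, colIdeal_eq, Submodule.add_eq_sup, Submodule.add_eq_sup]
    exact sup_le_sup (Ideal.mul_mono (augTil_le_augI u) le_rfl) le_rfl

end Statement15


/-- For `0 ≤ u ≤ n` and `1 ≤ v ≤ n`, `J_{m,u,v} ∩ 𝔄̃_u = J̃_{m,u,v}`, and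
consequently `𝕁_{m,u} ∩ Ã_u = 𝕁̃_{m,u}` where
`Ã_u = {B ∈ IA_n : all entries of B − I lie in 𝔄̃_u}`. -/
theorem statement_15 (n m u : ℕ) (hn : 1 ≤ n) (hm : 1 ≤ m) (hu : u ≤ n) (v : Fin n) :
    Jfull n m u v ⊓ augTil n u = Jtil n m u v ∧
    JmatFull n m u ∩ {g : IAn n | ∀ k l, (matOf g - 1) k l ∈ augTil n u} =
      JmatTil n m u := by
  refine ⟨Statement15.Jcap n m u v, ?_⟩
  ext g
  simp only [Set.mem_inter_iff, Set.mem_setOf_eq, JmatFull, JmatTil]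
  constructor
  · rintro ⟨⟨hJ, hd⟩, hA⟩
    refine ⟨fun k l => ?_, hd⟩
    rw [← Statement15.Jcap n m u l]
    exact Submodule.mem_inf.mpr ⟨hJ k l, hA k l⟩
  · rintro ⟨hJ, hd⟩
    refine ⟨⟨fun k l => ?_, hd⟩, fun k l => ?_⟩
    · have h2 := hJ k l
      rw [← Statement15.Jcap n m u l] at h2
      exact (Submodule.mem_inf.mp h2).1
    · have h2 := hJ k l
      rw [← Statement15.Jcap n m u l] at h2
      exact (Submodule.mem_inf.mp h2).2
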